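/- Under the hypotheses of the unbounded law (infinitely many variables X_1, X_2, … with conditional means pinched in [E̲[X_i], Ē[X_i]], gap ≤ δ, variances ≤ σ²), for every P ∈ K: P( limsup_{n→∞} ( (1/n)Σ_{i=1}^n X_i − μ̄_n ) ≤ 0 ) = 1 and P( liminf_{n→∞} ( (1/n)Σ_{i=1}^n X_i − μ̲_n ) ≥ 0 ) = 1. -/

import Mathlib

open MeasureTheory
open Filter Finset
open scoped ENNReal NNReal

lemma my_integrable_mul {α : Type*} {mα : MeasurableSpace α} {μ : Measure α} {f g : α → ℝ}
    (hf : MemLp f 2 μ) (hg : MemLp g 2 μ) : Integrable (f * g) μ := by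
  have h : Integrable (fun x => (f x ^ 2 + g x ^ 2) / 2) μ :=
    (hf.integrable_sq.add hg.integrable_sq).div_const 2
  refine h.mono' (hf.aestronglyMeasurable.mul hg.aestronglyMeasurable)
    (Eventually.of_forall fun x => ?_)
  simp only [Pi.mul_apply, Real.norm_eq_abs, abs_mul]
  nlinarith [sq_nonneg (|f x| - |g x|), sq_abs (f x), sq_abs (g x), abs_nonneg (f x),
    abs_nonneg (g x)]

lemma my_memLp_two_condexp {α : Type*} {mm m0 : MeasurableSpace α} (hle : mm ≤ m0)
    {μ : Measure α} [IsProbabilityMeasure μ] {f : α → ℝ}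
    (hf : MemLp f 2 μ) : MemLp (μ[f|mm]) 2 μ := by
  have h1 : (condExpL2 ℝ ℝ hle (hf.toLp f) : α → ℝ) =ᵐ[μ] μ[f|mm] := by
    refine ae_eq_condExp_of_forall_setIntegral_eq hle (hf.integrable one_le_two)
      (fun s _ _ => (integrable_condExpL2_of_isFiniteMeasure hle).integrableOn)
      (fun s hs hμs => ?_) (aestronglyMeasurable_condExpL2 hle _)
    rw [integral_condExpL2_eq hle _ hs hμs.ne]
    exact setIntegral_congr_ae (hle s hs) ((hf.coeFn_toLp).mono fun x hx _ => hx)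
  exact (Lp.memLp _).ae_eq h1

lemma my_condexp_sq_le {α : Type*} {mm m0 : MeasurableSpace α} (hle : mm ≤ m0)
    {μ : Measure α} [IsProbabilityMeasure μ] {f : α → ℝ}
    (hf : MemLp f 2 μ) :
    ∫ x, (f x - (μ[f|mm]) x) ^ 2 ∂μ ≤ ∫ x, f x ^ 2 ∂μ := by
  set g := μ[f|mm] with hgdef
  have hg2 : MemLp g 2 μ := my_memLp_two_condexp hle hf
  have hint_gf : Integrable (g * f) μ := my_integrable_mul hg2 hf
  have hpull : μ[g * f|mm] =ᵐ[μ] g * μ[f|mm] :=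
    condExp_mul_of_stronglyMeasurable_left stronglyMeasurable_condExp hint_gf (hf.integrable one_le_two)
  have hkey : ∫ x, g x * f x ∂μ = ∫ x, g x * g x ∂μ := by
    calc ∫ x, g x * f x ∂μ = ∫ x, (μ[g * f|mm]) x ∂μ := (integral_condExp hle).symm
      _ = ∫ x, (g * μ[f|mm]) x ∂μ := integral_congr_ae hpull
      _ = ∫ x, g x * g x ∂μ := by rfl
  have i1 : Integrable (fun x => f x ^ 2) μ := hf.integrable_sq
  have i2 : Integrable (fun x => g x * f x) μ := hint_gf
  have i2' : Integrable (fun x => 2 * (g x * f x)) μ := i2.const_mul 2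
  have i12 : Integrable (fun x => f x ^ 2 - 2 * (g x * f x)) μ := i1.sub i2'
  have i3 : Integrable (fun x => g x * g x) μ := my_integrable_mul hg2 hg2
  have hexp : ∀ x, (f x - g x) ^ 2 = f x ^ 2 - 2 * (g x * f x) + g x * g x := by
    intro x; ring
  calc ∫ x, (f x - g x) ^ 2 ∂μ
      = ∫ x, (f x ^ 2 - 2 * (g x * f x) + g x * g x) ∂μ := by simp_rw [hexp]
    _ = (∫ x, f x ^ 2 ∂μ) - 2 * (∫ x, g x * f x ∂μ) + ∫ x, g x * g x ∂μ := by
        rw [integral_add i12 i3, integral_sub i1 i2', integral_const_mul]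
    _ = (∫ x, f x ^ 2 ∂μ) - ∫ x, g x * g x ∂μ := by rw [hkey]; ring
    _ ≤ ∫ x, f x ^ 2 ∂μ := by
        have : 0 ≤ ∫ x, g x * g x ∂μ := integral_nonneg fun x => mul_self_nonneg _
        linarith

lemma my_condexp_var_le {α : Type*} {mm m0 : MeasurableSpace α} (hle : mm ≤ m0)
    {μ : Measure α} [IsProbabilityMeasure μ] {f : α → ℝ}
    (hf : MemLp f 2 μ) :
    ∫ x, (f x - (μ[f|mm]) x) ^ 2 ∂μ ≤ ∫ x, (f x - ∫ x', f x' ∂μ) ^ 2 ∂μ := by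
  set e := ∫ x', f x' ∂μ with he
  have hY : MemLp (fun x => f x - e) 2 μ := hf.sub (memLp_const e)
  have hYg : μ[(fun x => f x - e)|mm] =ᵐ[μ] fun x => (μ[f|mm]) x - e := by
    have h1 : μ[f - (fun _ => e)|mm] =ᵐ[μ] μ[f|mm] - μ[(fun _ => e)|mm] :=
      condExp_sub (hf.integrable one_le_two) (integrable_const e) mm
    have h2 : μ[(fun _ : α => e)|mm] = fun _ => e := condExp_const hle e
    refine h1.mono fun x hx => ?_
    simp only [Pi.sub_apply, h2] at hx ⊢
    exact hx
  have heq2 : (fun x => (f x - (μ[f|mm]) x) ^ 2) =ᵐ[μ]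
      fun x => ((f x - e) - (μ[(fun x => f x - e)|mm]) x) ^ 2 := by
    refine hYg.mono fun x hx => ?_
    dsimp only at hx ⊢
    rw [hx]; ring
  calc ∫ x, (f x - (μ[f|mm]) x) ^ 2 ∂μ
      = ∫ x, ((f x - e) - (μ[(fun x => f x - e)|mm]) x) ^ 2 ∂μ := integral_congr_ae heq2
    _ ≤ ∫ x, (f x - e) ^ 2 ∂μ := my_condexp_sq_le hle hY

lemma my_sum_inv_sq_le (n : ℕ) : ∑ i ∈ Finset.Icc 1 n, (1 : ℝ) / (i : ℝ) ^ 2 ≤ 2 := by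
  have h : ∀ n : ℕ, 1 ≤ n → ∑ i ∈ Finset.Icc 1 n, (1 : ℝ) / (i : ℝ) ^ 2 ≤ 2 - 1 / n := by
    intro n hn
    induction n, hn using Nat.le_induction with
    | base => norm_num
    | succ n hn ih =>
      rw [Finset.sum_Icc_succ_top (Nat.succ_le_succ (Nat.zero_le n))]
      have hn' : (1 : ℝ) ≤ (n : ℝ) := by exact_mod_cast hn
      have h1 : (1 : ℝ) / ((n + 1 : ℕ) : ℝ) ^ 2 ≤ 1 / n - 1 / (n + 1) := by
        push_cast
        rw [div_sub_div _ _ (by positivity) (by positivity),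
          div_le_div_iff₀ (by positivity) (by positivity)]
        nlinarith
      push_cast at *
      linarith
  rcases Nat.eq_zero_or_pos n with h0 | h1
  · simp [h0]
  · have := h n h1
    have h2 : (0 : ℝ) < 1 / n := by positivity
    linarith

lemma my_kronecker {a : ℕ → ℝ} {c : ℝ}
    (h : Tendsto (fun n : ℕ => ∑ i ∈ Finset.Icc 1 n, a i / (i : ℝ)) atTop (nhds c)) :
    Tendsto (fun n : ℕ => (∑ i ∈ Finset.Icc 1 n, a i) / (n : ℝ)) atTop (nhds 0) := by
  set b : ℕ → ℝ := fun n => ∑ i ∈ Finset.Icc 1 n, a i / (i : ℝ) with hb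
  have key : ∀ n : ℕ, ∑ i ∈ Finset.Icc 1 n, a i
      = (n : ℝ) * b n - ∑ i ∈ Finset.range n, b i := by
    intro n
    induction n with
    | zero => simp [hb]
    | succ n ih =>
      have hbsucc : b (n + 1) = b n + a (n + 1) / ((n + 1 : ℕ) : ℝ) :=
        Finset.sum_Icc_succ_top (Nat.succ_le_succ (Nat.zero_le n)) _
      rw [Finset.sum_Icc_succ_top (Nat.succ_le_succ (Nat.zero_le n)), ih,
        Finset.sum_range_succ, hbsucc]
      have hne : ((n : ℝ) + 1) ≠ 0 := by positivity
      push_cast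
      field_simp
      ring
  have hces : Tendsto (fun n : ℕ => (n : ℝ)⁻¹ • ∑ i ∈ Finset.range n, b i) atTop (nhds c) :=
    h.cesaro
  have hmain : Tendsto (fun n : ℕ => b n - (n : ℝ)⁻¹ • ∑ i ∈ Finset.range n, b i)
      atTop (nhds 0) := by
    have := h.sub hces
    simpa using this
  refine hmain.congr' ?_
  filter_upwards [eventually_ge_atTop 1] with n hn
  have hne : (n : ℝ) ≠ 0 := by positivity
  rw [key n, smul_eq_mul]
  field_simp


/-- Almost-sure law for (possibly unbounded) variables: under the pinched-conditional-mean
hypotheses (gap at most `δ`, variances at most `σ²`) for the infinite sequence `X_1, X_2, …`,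
every `P ∈ K` satisfies
`P( limsup_n ((1/n) Σ_{i=1}^n X_i - μ̄_n) ≤ 0 ) = 1` and
`P( liminf_n ((1/n) Σ_{i=1}^n X_i - μ̲_n) ≥ 0 ) = 1`. -/
theorem unbounded_almost_sure_law {Ω : Type*} [m : MeasurableSpace Ω]
    (K : Set (Measure Ω)) (hK : K.Nonempty) (hKp : ∀ P ∈ K, IsProbabilityMeasure P)
    (X : ℕ → Ω → ℝ) (hmeas : ∀ i, Measurable (X i))
    (hL2 : ∀ P ∈ K, ∀ i, MemLp (X i) 2 P)
    (𝒢 : ℕ → MeasurableSpace Ω)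
    (h𝒢 : ∀ i, 𝒢 i = ⨆ j ∈ Finset.Icc 1 i, MeasurableSpace.comap (X j) inferInstance)
    (σ2 δ : ℝ)
    (hvar : ∀ P ∈ K, ∀ i, 1 ≤ i → ∫ ω, (X i ω - ∫ ω', X i ω' ∂P) ^ 2 ∂P ≤ σ2)
    (hgap : ∀ i, 1 ≤ i →
      (⨆ Q ∈ K, ∫ ω', X i ω' ∂Q) - (⨅ Q ∈ K, ∫ ω', X i ω' ∂Q) ≤ δ)
    (hirr : ∀ P ∈ K, ∀ i, 1 ≤ i →
      ∀ᵐ ω ∂P, (⨅ Q ∈ K, ∫ ω', X i ω' ∂Q) ≤ (P[X i | 𝒢 (i - 1)]) ω ∧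
        (P[X i | 𝒢 (i - 1)]) ω ≤ ⨆ Q ∈ K, ∫ ω', X i ω' ∂Q) :
    ∀ P ∈ K,
      P {ω | Filter.limsup
          (fun n : ℕ => (∑ i ∈ Finset.Icc 1 n, X i ω) / n -
            (∑ i ∈ Finset.Icc 1 n, ⨆ Q ∈ K, ∫ ω', X i ω' ∂Q) / n) Filter.atTop ≤ 0} = 1 ∧
      P {ω | 0 ≤ Filter.liminf
          (fun n : ℕ => (∑ i ∈ Finset.Icc 1 n, X i ω) / n -
            (∑ i ∈ Finset.Icc 1 n, ⨅ Q ∈ K, ∫ ω', X i ω' ∂Q) / n) Filter.atTop} = 1 := by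
  intro P hP
  haveI : IsProbabilityMeasure P := hKp P hP
  set Eu : ℕ → ℝ := fun i => ⨆ Q ∈ K, ∫ ω', X i ω' ∂Q with hEu
  set El : ℕ → ℝ := fun i => ⨅ Q ∈ K, ∫ ω', X i ω' ∂Q with hEl
  have hle : ∀ n, 𝒢 n ≤ m := by
    intro n; rw [h𝒢]
    exact iSup_le fun j => iSup_le fun _ => measurable_iff_comap_le.mp (hmeas j)
  have hmono : Monotone 𝒢 := by
    intro a b hab; rw [h𝒢 a, h𝒢 b]
    exact iSup_le fun j => iSup_le fun hj =>
      le_iSup₂ (f := fun (j : ℕ) (_ : j ∈ Finset.Icc 1 b) =>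
        MeasurableSpace.comap (X j) inferInstance) j (Finset.Icc_subset_Icc_right hab hj)
  set ℱ : Filtration ℕ m := ⟨𝒢, hmono, hle⟩ with hℱ
  set mi : ℕ → Ω → ℝ := fun i => P[X i | 𝒢 (i - 1)] with hmi
  have hXL2 : ∀ i, MemLp (X i) 2 P := hL2 P hP
  have hXint : ∀ i, Integrable (X i) P := fun i => (hXL2 i).integrable one_le_two
  have hmiL2 : ∀ i, MemLp (mi i) 2 P := fun i => my_memLp_two_condexp (hle _) (hXL2 i)
  have hmi_int : ∀ i, Integrable (mi i) P := fun i => integrable_condExp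
  set d : ℕ → Ω → ℝ := fun i ω => X i ω - mi i ω with hd
  have hdL2 : ∀ i, MemLp (d i) 2 P := fun i => (hXL2 i).sub (hmiL2 i)
  have hd_int : ∀ i, Integrable (d i) P := fun i => (hXint i).sub (hmi_int i)
  have hXsm : ∀ i n, 1 ≤ i → i ≤ n → StronglyMeasurable[𝒢 n] (X i) := by
    intro i n h1 h2
    refine Measurable.stronglyMeasurable ?_
    rw [measurable_iff_comap_le, h𝒢 n]
    exact le_iSup₂ (f := fun (j : ℕ) (_ : j ∈ Finset.Icc 1 n) =>
      MeasurableSpace.comap (X j) inferInstance) i (Finset.mem_Icc.mpr ⟨h1, h2⟩)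
  have hmism : ∀ i n, i - 1 ≤ n → StronglyMeasurable[𝒢 n] (mi i) := fun i n hin =>
    stronglyMeasurable_condExp.mono (hmono hin)
  set M : ℕ → Ω → ℝ := fun n ω => ∑ i ∈ Finset.Icc 1 n, d i ω / (i : ℝ) with hM
  have hMadp : ∀ n, StronglyMeasurable[𝒢 n] (M n) := by
    intro n
    refine Finset.stronglyMeasurable_fun_sum _ fun i hi => ?_
    rw [Finset.mem_Icc] at hi
    simp only [div_eq_mul_inv]
    exact ((hXsm i n hi.1 hi.2).sub
      (hmism i n (le_trans (Nat.sub_le i 1) hi.2))).mul stronglyMeasurable_const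
  have hMint : ∀ n, Integrable (M n) P :=
    fun n => integrable_finset_sum _ fun i _ => (hd_int i).div_const _
  have hML2 : ∀ n, MemLp (M n) 2 P := by
    intro n
    refine memLp_finset_sum _ fun i _ => ?_
    rw [show (fun ω => d i ω / (i : ℝ)) = fun ω => ((i : ℝ))⁻¹ * d i ω from
      funext fun ω => div_eq_inv_mul _ _]
    exact (hdL2 i).const_mul _
  have hd0 : ∀ n : ℕ, P[d (n + 1)|𝒢 n] =ᵐ[P] 0 := by
    intro n
    have h1 : mi (n + 1) = P[X (n + 1)|𝒢 n] := rfl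
    have h2 : P[mi (n + 1)|𝒢 n] = mi (n + 1) :=
      condExp_of_stronglyMeasurable (hle n) (hmism (n + 1) n (by simp)) (hmi_int _)
    have h3 : P[d (n + 1)|𝒢 n] =ᵐ[P] P[X (n + 1)|𝒢 n] - P[mi (n + 1)|𝒢 n] :=
      condExp_sub (hXint _) (hmi_int _) _
    refine h3.trans ?_
    rw [h2, ← h1, sub_self]
  have hMsucc : ∀ n, M (n + 1) = M n + fun ω => d (n + 1) ω / ((n : ℝ) + 1) := by
    intro n; funext ω
    simp only [hM, Pi.add_apply]
    rw [Finset.sum_Icc_succ_top (Nat.succ_le_succ (Nat.zero_le n))]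
    push_cast; ring
  have hMD : ∀ n, ∫ ω, M n ω * d (n + 1) ω ∂P = 0 := by
    intro n
    have hint_Md : Integrable (M n * d (n + 1)) P := my_integrable_mul (hML2 n) (hdL2 (n + 1))
    have h2 : P[M n * d (n + 1)|𝒢 n] =ᵐ[P] M n * P[d (n + 1)|𝒢 n] :=
      condExp_mul_of_stronglyMeasurable_left (hMadp n) hint_Md (hd_int (n + 1))
    have h3 : M n * P[d (n + 1)|𝒢 n] =ᵐ[P] 0 := by
      filter_upwards [hd0 n] with ω hω
      simp only [Pi.mul_apply, hω, Pi.zero_apply, mul_zero]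
    calc ∫ ω, M n ω * d (n + 1) ω ∂P
        = ∫ ω, (P[M n * d (n + 1)|𝒢 n]) ω ∂P := (integral_condExp (hle n)).symm
      _ = 0 := by rw [integral_congr_ae (h2.trans h3)]; simp
  have hortho : ∀ n, ∫ ω, (M n ω) ^ 2 ∂P
      = ∑ i ∈ Finset.Icc 1 n, (∫ ω, (d i ω) ^ 2 ∂P) / (i : ℝ) ^ 2 := by
    intro n
    induction n with
    | zero => simp [hM]
    | succ n ih =>
      have hne : ((n : ℝ) + 1) ≠ 0 := by positivity
      have hsq : ∀ ω, (M (n + 1) ω) ^ 2 = (M n ω) ^ 2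
          + (2 / ((n : ℝ) + 1)) * (M n ω * d (n + 1) ω)
          + (d (n + 1) ω) ^ 2 / ((n : ℝ) + 1) ^ 2 := by
        intro ω; rw [hMsucc n]
        simp only [Pi.add_apply]
        field_simp
        ring
      have i1 : Integrable (fun ω => (M n ω) ^ 2) P := (hML2 n).integrable_sq
      have iMd : Integrable (M n * d (n + 1)) P := my_integrable_mul (hML2 n) (hdL2 (n + 1))
      have i2 : Integrable (fun ω => (2 / ((n : ℝ) + 1)) * (M n ω * d (n + 1) ω)) P :=
        iMd.const_mul _
      have i3 : Integrable (fun ω => (d (n + 1) ω) ^ 2 / ((n : ℝ) + 1) ^ 2) P :=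
        ((hdL2 (n + 1)).integrable_sq).div_const _
      have i12 : Integrable (fun ω => (M n ω) ^ 2
          + (2 / ((n : ℝ) + 1)) * (M n ω * d (n + 1) ω)) P := i1.add i2
      calc ∫ ω, (M (n + 1) ω) ^ 2 ∂P
          = ∫ ω, ((M n ω) ^ 2 + (2 / ((n : ℝ) + 1)) * (M n ω * d (n + 1) ω)
              + (d (n + 1) ω) ^ 2 / ((n : ℝ) + 1) ^ 2) ∂P := by simp_rw [hsq]
        _ = (∫ ω, (M n ω) ^ 2 ∂P) + (2 / ((n : ℝ) + 1)) * (∫ ω, M n ω * d (n + 1) ω ∂P)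
              + (∫ ω, (d (n + 1) ω) ^ 2 ∂P) / ((n : ℝ) + 1) ^ 2 := by
            rw [integral_add i12 i3, integral_add i1 i2, integral_const_mul, integral_div]
        _ = ∑ i ∈ Finset.Icc 1 (n + 1), (∫ ω, (d i ω) ^ 2 ∂P) / (i : ℝ) ^ 2 := by
            rw [ih, hMD n, Finset.sum_Icc_succ_top (Nat.succ_le_succ (Nat.zero_le n))]
            push_cast; ring
  set σ2' : ℝ := max σ2 0 with hσ2'
  have hσ2'0 : (0 : ℝ) ≤ σ2' := le_max_right _ _
  have hvar_d : ∀ i, 1 ≤ i → ∫ ω, (d i ω) ^ 2 ∂P ≤ σ2' := by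
    intro i hi
    have h1 : ∫ ω, (d i ω) ^ 2 ∂P ≤ ∫ ω, (X i ω - ∫ ω', X i ω' ∂P) ^ 2 ∂P :=
      my_condexp_var_le (hle (i - 1)) (hXL2 i)
    exact le_trans h1 (le_trans (hvar P hP i hi) (le_max_left _ _))
  have hM2 : ∀ n, ∫ ω, (M n ω) ^ 2 ∂P ≤ 2 * σ2' := by
    intro n
    rw [hortho n]
    have h1 : ∑ i ∈ Finset.Icc 1 n, (∫ ω, (d i ω) ^ 2 ∂P) / (i : ℝ) ^ 2
        ≤ ∑ i ∈ Finset.Icc 1 n, σ2' * ((1 : ℝ) / (i : ℝ) ^ 2) := by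
      refine Finset.sum_le_sum fun i hi => ?_
      rw [Finset.mem_Icc] at hi
      have hipos : (0 : ℝ) < (i : ℝ) ^ 2 := by
        have : (0 : ℝ) < (i : ℝ) := by exact_mod_cast hi.1
        positivity
      rw [mul_one_div]
      exact (div_le_div_iff_of_pos_right hipos).mpr (hvar_d i hi.1)
    refine le_trans h1 ?_
    rw [← Finset.mul_sum]
    have h2 := my_sum_inv_sq_le n
    nlinarith
  have hbdd : ∀ n, eLpNorm (M n) 1 P ≤ (((1 + 2 * σ2') / 2).toNNReal : ℝ≥0∞) := by
    intro n
    have h1 : eLpNorm (M n) 1 P = ENNReal.ofReal (∫ ω, ‖M n ω‖ ∂P) := by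
      rw [ofReal_integral_norm_eq_lintegral_enorm (hMint n), eLpNorm_one_eq_lintegral_enorm]
    have h2 : ∫ ω, ‖M n ω‖ ∂P ≤ ∫ ω, (1 + (M n ω) ^ 2) / 2 ∂P := by
      refine integral_mono (hMint n).norm
        (((integrable_const (1 : ℝ)).add (hML2 n).integrable_sq).div_const 2) fun ω => ?_
      simp only [Real.norm_eq_abs]
      nlinarith [sq_nonneg (|M n ω| - 1), sq_abs (M n ω), abs_nonneg (M n ω)]
    have h3 : ∫ ω, (1 + (M n ω) ^ 2) / 2 ∂P ≤ (1 + 2 * σ2') / 2 := by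
      rw [integral_div, integral_add (integrable_const (1 : ℝ)) (hML2 n).integrable_sq,
        integral_const]
      simp only [measure_univ, ENNReal.toReal_one, smul_eq_mul, one_mul, probReal_univ]
      have := hM2 n
      linarith
    have : eLpNorm (M n) 1 P ≤ ENNReal.ofReal ((1 + 2 * σ2') / 2) := by
      rw [h1]; exact ENNReal.ofReal_le_ofReal (le_trans h2 h3)
    exact this
  have hmart : Martingale M ℱ P := by
    refine martingale_nat hMadp hMint fun n => ?_
    have e2 : P[M (n + 1)|𝒢 n] =ᵐ[P]
        P[M n|𝒢 n] + P[fun ω => d (n + 1) ω / ((n : ℝ) + 1)|𝒢 n] := by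
      rw [hMsucc n]
      exact condExp_add (hMint n) ((hd_int (n + 1)).div_const _) _
    have e3 : P[M n|𝒢 n] = M n :=
      condExp_of_stronglyMeasurable (hle n) (hMadp n) (hMint n)
    have e4 : P[fun ω => d (n + 1) ω / ((n : ℝ) + 1)|𝒢 n] =ᵐ[P] 0 := by
      have h5 : (fun ω => d (n + 1) ω / ((n : ℝ) + 1)) = ((n : ℝ) + 1)⁻¹ • d (n + 1) := by
        funext ω; simp [div_eq_inv_mul]
      rw [h5]
      refine (condExp_smul _ _ _).trans ?_
      filter_upwards [hd0 n] with ω hω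
      simp only [Pi.smul_apply, hω, Pi.zero_apply, smul_eq_mul, mul_zero]
    refine EventuallyEq.symm (e2.trans ?_)
    rw [e3]
    filter_upwards [e4] with ω hω
    simp only [Pi.add_apply, hω, Pi.zero_apply, add_zero]
  have hconv : ∀ᵐ ω ∂P, ∃ c, Tendsto (fun n => M n ω) atTop (nhds c) :=
    hmart.submartingale.exists_ae_tendsto_of_bdd hbdd
  have hpinch : ∀ᵐ ω ∂P, ∀ i : ℕ, 1 ≤ i → El i ≤ mi i ω ∧ mi i ω ≤ Eu i := by
    rw [ae_all_iff]
    intro i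
    by_cases hi : 1 ≤ i
    · filter_upwards [hirr P hP i hi] with ω hω
      exact fun _ => hω
    · exact Eventually.of_forall fun ω h => absurd h hi
  have hmain : ∀ᵐ ω ∂P,
      (Filter.limsup (fun n : ℕ => (∑ i ∈ Finset.Icc 1 n, X i ω) / n
        - (∑ i ∈ Finset.Icc 1 n, Eu i) / n) Filter.atTop ≤ 0) ∧
      (0 ≤ Filter.liminf (fun n : ℕ => (∑ i ∈ Finset.Icc 1 n, X i ω) / n
        - (∑ i ∈ Finset.Icc 1 n, El i) / n) Filter.atTop) := by
    filter_upwards [hconv, hpinch] with ω hc hp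
    obtain ⟨c, hc⟩ := hc
    have hg0 : Tendsto (fun n : ℕ => (∑ i ∈ Finset.Icc 1 n, d i ω) / (n : ℝ))
        atTop (nhds 0) := my_kronecker (a := fun i => d i ω) (c := c) hc
    have hsum : ∀ n : ℕ, (∑ i ∈ Finset.Icc 1 n, d i ω)
        = (∑ i ∈ Finset.Icc 1 n, X i ω) - ∑ i ∈ Finset.Icc 1 n, mi i ω := by
      intro n; rw [← Finset.sum_sub_distrib]
    have hgev : ∀ᶠ n in atTop, (-1 : ℝ) ≤ (∑ i ∈ Finset.Icc 1 n, d i ω) / (n : ℝ) :=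
      hg0.eventually (eventually_ge_nhds (by norm_num))
    have hgev' : ∀ᶠ n in atTop, ((∑ i ∈ Finset.Icc 1 n, d i ω) / (n : ℝ) : ℝ) ≤ 1 :=
      hg0.eventually (eventually_le_nhds (by norm_num))
    constructor
    · -- limsup part
      have hfg : ∀ n : ℕ, (∑ i ∈ Finset.Icc 1 n, X i ω) / (n : ℝ)
          - (∑ i ∈ Finset.Icc 1 n, Eu i) / (n : ℝ)
          ≤ (∑ i ∈ Finset.Icc 1 n, d i ω) / (n : ℝ) := by
        intro n
        rcases Nat.eq_zero_or_pos n with h0 | h1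
        · simp [h0]
        · have hn : (0 : ℝ) < n := by exact_mod_cast h1
          rw [hsum n, sub_div]
          refine sub_le_sub_left ((div_le_div_iff_of_pos_right hn).mpr ?_) _
          exact Finset.sum_le_sum fun i hi => (hp i (Finset.mem_Icc.mp hi).1).2
      have hflow : ∀ᶠ n in atTop, (∑ i ∈ Finset.Icc 1 n, d i ω) / (n : ℝ) - δ
          ≤ (∑ i ∈ Finset.Icc 1 n, X i ω) / (n : ℝ)
            - (∑ i ∈ Finset.Icc 1 n, Eu i) / (n : ℝ) := by
        filter_upwards [eventually_ge_atTop 1] with n hn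
        have hnp : (0 : ℝ) < n := by exact_mod_cast hn
        have h4 : ∑ i ∈ Finset.Icc 1 n, Eu i
            ≤ (∑ i ∈ Finset.Icc 1 n, mi i ω) + (n : ℝ) * δ := by
          have h5 : ∀ i ∈ Finset.Icc 1 n, Eu i ≤ mi i ω + δ := by
            intro i hi
            have h6 := (hp i (Finset.mem_Icc.mp hi).1).1
            have h7 : Eu i - El i ≤ δ := hgap i (Finset.mem_Icc.mp hi).1
            linarith
          calc ∑ i ∈ Finset.Icc 1 n, Eu i ≤ ∑ i ∈ Finset.Icc 1 n, (mi i ω + δ) :=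
                Finset.sum_le_sum h5
            _ = (∑ i ∈ Finset.Icc 1 n, mi i ω) + (n : ℝ) * δ := by
                rw [Finset.sum_add_distrib, Finset.sum_const, Nat.card_Icc]
                simp [Nat.add_sub_cancel, nsmul_eq_mul]
        have h8 : (∑ i ∈ Finset.Icc 1 n, Eu i) / (n : ℝ)
            ≤ (∑ i ∈ Finset.Icc 1 n, mi i ω) / (n : ℝ) + δ := by
          have h9 := (div_le_div_iff_of_pos_right hnp).mpr h4
          rw [add_div] at h9
          calc (∑ i ∈ Finset.Icc 1 n, Eu i) / (n : ℝ)
              ≤ (∑ i ∈ Finset.Icc 1 n, mi i ω) / (n : ℝ) + (n : ℝ) * δ / (n : ℝ) := h9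
            _ = (∑ i ∈ Finset.Icc 1 n, mi i ω) / (n : ℝ) + δ := by
                rw [mul_div_cancel_left₀ δ hnp.ne']
        rw [hsum n, sub_div]
        linarith
      have hgb : IsBoundedUnder (· ≤ ·) atTop
          (fun n : ℕ => (∑ i ∈ Finset.Icc 1 n, d i ω) / (n : ℝ)) := hg0.isBoundedUnder_le
      have hcob : IsCoboundedUnder (· ≤ ·) atTop
          (fun n : ℕ => (∑ i ∈ Finset.Icc 1 n, X i ω) / (n : ℝ)
            - (∑ i ∈ Finset.Icc 1 n, Eu i) / (n : ℝ)) := by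
        refine isCoboundedUnder_le_of_eventually_le atTop (x := -1 - δ) ?_
        filter_upwards [hflow, hgev] with n h1 h2
        linarith
      calc Filter.limsup (fun n : ℕ => (∑ i ∈ Finset.Icc 1 n, X i ω) / (n : ℝ)
            - (∑ i ∈ Finset.Icc 1 n, Eu i) / (n : ℝ)) atTop
          ≤ Filter.limsup (fun n : ℕ => (∑ i ∈ Finset.Icc 1 n, d i ω) / (n : ℝ)) atTop :=
            limsup_le_limsup (Eventually.of_forall hfg) hcob hgb
        _ = 0 := hg0.limsup_eq
    · -- liminf part
      have hgf : ∀ n : ℕ, (∑ i ∈ Finset.Icc 1 n, d i ω) / (n : ℝ)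
          ≤ (∑ i ∈ Finset.Icc 1 n, X i ω) / (n : ℝ)
            - (∑ i ∈ Finset.Icc 1 n, El i) / (n : ℝ) := by
        intro n
        rcases Nat.eq_zero_or_pos n with h0 | h1
        · simp [h0]
        · have hn : (0 : ℝ) < n := by exact_mod_cast h1
          rw [hsum n, sub_div]
          refine sub_le_sub_left ((div_le_div_iff_of_pos_right hn).mpr ?_) _
          exact Finset.sum_le_sum fun i hi => (hp i (Finset.mem_Icc.mp hi).1).1
      have hfhigh : ∀ᶠ n in atTop, (∑ i ∈ Finset.Icc 1 n, X i ω) / (n : ℝ)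
          - (∑ i ∈ Finset.Icc 1 n, El i) / (n : ℝ)
          ≤ (∑ i ∈ Finset.Icc 1 n, d i ω) / (n : ℝ) + δ := by
        filter_upwards [eventually_ge_atTop 1] with n hn
        have hnp : (0 : ℝ) < n := by exact_mod_cast hn
        have h4 : (∑ i ∈ Finset.Icc 1 n, mi i ω) - (n : ℝ) * δ
            ≤ ∑ i ∈ Finset.Icc 1 n, El i := by
          have h5 : ∀ i ∈ Finset.Icc 1 n, mi i ω - δ ≤ El i := by
            intro i hi
            have h6 := (hp i (Finset.mem_Icc.mp hi).1).2
            have h7 : Eu i - El i ≤ δ := hgap i (Finset.mem_Icc.mp hi).1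
            linarith
          calc (∑ i ∈ Finset.Icc 1 n, mi i ω) - (n : ℝ) * δ
              = ∑ i ∈ Finset.Icc 1 n, (mi i ω - δ) := by
                rw [Finset.sum_sub_distrib, Finset.sum_const, Nat.card_Icc]
                simp [Nat.add_sub_cancel, nsmul_eq_mul]
            _ ≤ ∑ i ∈ Finset.Icc 1 n, El i := Finset.sum_le_sum h5
        have h8 : (∑ i ∈ Finset.Icc 1 n, mi i ω) / (n : ℝ) - δ
            ≤ (∑ i ∈ Finset.Icc 1 n, El i) / (n : ℝ) := by
          have h9 := (div_le_div_iff_of_pos_right hnp).mpr h4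
          rw [sub_div, mul_div_cancel_left₀ δ hnp.ne'] at h9
          exact h9
        rw [hsum n, sub_div]
        linarith
      have hgb : IsBoundedUnder (· ≥ ·) atTop
          (fun n : ℕ => (∑ i ∈ Finset.Icc 1 n, d i ω) / (n : ℝ)) := hg0.isBoundedUnder_ge
      have hcob : IsCoboundedUnder (· ≥ ·) atTop
          (fun n : ℕ => (∑ i ∈ Finset.Icc 1 n, X i ω) / (n : ℝ)
            - (∑ i ∈ Finset.Icc 1 n, El i) / (n : ℝ)) := by
        refine isCoboundedUnder_ge_of_eventually_le atTop (x := 1 + δ) ?_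
        filter_upwards [hfhigh, hgev'] with n h1 h2
        linarith
      calc (0 : ℝ)
          = Filter.liminf (fun n : ℕ => (∑ i ∈ Finset.Icc 1 n, d i ω) / (n : ℝ)) atTop :=
            hg0.liminf_eq.symm
        _ ≤ Filter.liminf (fun n : ℕ => (∑ i ∈ Finset.Icc 1 n, X i ω) / (n : ℝ)
            - (∑ i ∈ Finset.Icc 1 n, El i) / (n : ℝ)) atTop :=
            liminf_le_liminf (Eventually.of_forall hgf) hgb hcob
  have conclude : ∀ S : Set Ω, (∀ᵐ ω ∂P, ω ∈ S) → P S = 1 := by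
    intro S hS
    have h1 : P Sᶜ = 0 := by
      rw [ae_iff] at hS
      simpa [Set.compl_def] using hS
    have h2 : S =ᵐ[P] (Set.univ : Set Ω) := ae_eq_univ.mpr h1
    rw [measure_congr h2, measure_univ]
  exact ⟨conclude _ (hmain.mono fun ω h => h.1), conclude _ (hmain.mono fun ω h => h.2)⟩
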